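/- For a 2×2 density matrix ρ, the maximum of (1/2)‖[ρ,H]‖₁ over diagonal Hermitian H with Hilbert–Schmidt norm ‖H‖₂ ≤ 1 equals √2 |ρ₁₂|, attained at H = (1/√2)(|1⟩⟨1| − |2⟩⟨2|). -/

import Mathlib

open Matrix Complex
open scoped ComplexOrder

/-- Trace norm `‖A‖₁ = tr √(AᴴA)`. -/
noncomputable def traceNorm {d : ℕ} (A : Matrix (Fin d) (Fin d) ℂ) : ℝ :=
  ((Matrix.posSemidef_conjTranspose_mul_self A).1.eigenvectorUnitary.1 *
    diagonal (((↑) : ℝ → ℂ) ∘ (√·) ∘ (Matrix.posSemidef_conjTranspose_mul_self A).1.eigenvalues) *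
    (star (Matrix.posSemidef_conjTranspose_mul_self A).1.eigenvectorUnitary :
      Matrix (Fin d) (Fin d) ℂ)).trace.re


lemma scalar_key (z : ℂ) (a b : ℝ) :
    ((‖z‖ : ℝ) : ℂ) * ((|b - a| : ℝ) : ℂ) * (((‖z‖ : ℝ) : ℂ) * ((|b - a| : ℝ) : ℂ))
      = (starRingEnd ℂ) z * z * (((b : ℂ) - (a : ℂ)) * ((b : ℂ) - (a : ℂ))) := by
  have hz : ((‖z‖ : ℝ) : ℂ) * ((‖z‖ : ℝ) : ℂ) = (starRingEnd ℂ) z * z := by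
    have habs : ‖z‖ * ‖z‖ = Complex.normSq z := by
      rw [← Complex.sq_norm]; ring
    rw [← Complex.ofReal_mul, habs, Complex.normSq_eq_conj_mul_self]
  have hw : ((|b - a| : ℝ) : ℂ) * ((|b - a| : ℝ) : ℂ) = ((b : ℂ) - (a : ℂ)) * ((b : ℂ) - (a : ℂ)) := by
    rw [← Complex.ofReal_mul, abs_mul_abs_self]; push_cast; ring
  calc ((‖z‖ : ℝ) : ℂ) * ((|b - a| : ℝ) : ℂ) * (((‖z‖ : ℝ) : ℂ) * ((|b - a| : ℝ) : ℂ))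
      = (((‖z‖ : ℝ) : ℂ) * ((‖z‖ : ℝ) : ℂ)) * (((|b - a| : ℝ) : ℂ) * ((|b - a| : ℝ) : ℂ)) := by ring
    _ = (starRingEnd ℂ) z * z * (((b : ℂ) - (a : ℂ)) * ((b : ℂ) - (a : ℂ))) := by rw [hz, hw]

lemma traceNorm_of_sq {A : Matrix (Fin 2) (Fin 2) ℂ} {m : ℝ} (hm0 : 0 ≤ m)
    (hsq : (Matrix.diagonal (fun _ : Fin 2 => (m:ℂ))) ^ 2 = Aᴴ * A) : traceNorm A = 2 * m := by
  have heig : ∀ i, (Matrix.posSemidef_conjTranspose_mul_self A).1.eigenvalues i = m ^ 2 := by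
    intro i
    have hmem := (Matrix.posSemidef_conjTranspose_mul_self A).1.eigenvalues_mem_spectrum_real i
    have hsc : Aᴴ * A = algebraMap ℝ (Matrix (Fin 2) (Fin 2) ℂ) (m ^ 2) := by
      rw [← hsq, Matrix.algebraMap_eq_diagonal]
      ext i j
      fin_cases i <;> fin_cases j <;> simp [pow_two, Matrix.diagonal, Matrix.mul_apply, Fin.sum_univ_two]
    have hsp : spectrum ℝ (Aᴴ * A) = {m ^ 2} := by rw [hsc, spectrum.scalar_eq]
    rw [hsp] at hmem
    exact hmem
  unfold traceNorm
  rw [Matrix.trace_mul_cycle, Unitary.coe_star_mul_self, one_mul]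
  simp [Matrix.trace, Fin.sum_univ_two, heig, Real.sqrt_sq hm0]

lemma traceNorm_comm (ρ : Matrix (Fin 2) (Fin 2) ℂ) (hρ : ρ.IsHermitian)
    (h : Fin 2 → ℝ) :
    traceNorm (ρ * Matrix.diagonal (fun j => (h j : ℂ))
      - Matrix.diagonal (fun j => (h j : ℂ)) * ρ)
      = 2 * (‖ρ 0 1‖ * |h 1 - h 0|) := by
  set A := ρ * Matrix.diagonal (fun j => (h j : ℂ))
      - Matrix.diagonal (fun j => (h j : ℂ)) * ρ with hA
  obtain ⟨m, hm⟩ : ∃ m : ℝ, m = ‖ρ 0 1‖ * |h 1 - h 0| := ⟨_, rfl⟩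
  have hm0 : (0:ℝ) ≤ m := hm ▸ mul_nonneg (norm_nonneg _) (abs_nonneg _)
  have hρ10 : ρ 1 0 = star (ρ 0 1) := by
    conv_lhs => rw [← hρ]
    rfl
  have hD : Matrix.PosSemidef (Matrix.diagonal (fun _ : Fin 2 => (m:ℂ))) :=
    Matrix.PosSemidef.diagonal (fun _ => by positivity)
  have hsq : (Matrix.diagonal (fun _ : Fin 2 => (m:ℂ))) ^ 2 = Aᴴ * A := by
    rw [← Matrix.ext_iff]
    simp only [Fin.forall_fin_two]
    refine ⟨⟨?_, ?_⟩, ?_, ?_⟩ <;>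
    simp [pow_two, Matrix.mul_apply, Fin.sum_univ_two, hA, Matrix.diagonal, hρ10,
        Matrix.conjTranspose_apply, hm]
    · linear_combination scalar_key (ρ 0 1) (h 0) (h 1)
    · ring
    · ring
    · linear_combination scalar_key (ρ 0 1) (h 0) (h 1)
  rw [traceNorm_of_sq hm0 hsq, hm]

lemma half_traceNorm_comm (ρ : Matrix (Fin 2) (Fin 2) ℂ) (hρ : ρ.IsHermitian)
    (h : Fin 2 → ℝ) :
    (1 / 2) * traceNorm (ρ * Matrix.diagonal (fun j => (h j : ℂ))
      - Matrix.diagonal (fun j => (h j : ℂ)) * ρ)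
      = ‖ρ 0 1‖ * |h 1 - h 0| := by
  rw [traceNorm_comm ρ hρ h]; ring

lemma sqrt2_half : |(-(1 / Real.sqrt 2)) - (1 / Real.sqrt 2)| = Real.sqrt 2 := by
  have h2 : (0:ℝ) < Real.sqrt 2 := Real.sqrt_pos.mpr (by norm_num)
  have h2' : Real.sqrt 2 * Real.sqrt 2 = 2 := Real.mul_self_sqrt (by norm_num)
  have h3 : (0:ℝ) < 1 / Real.sqrt 2 := by positivity
  rw [abs_of_nonpos (by nlinarith)]
  field_simp
  norm_num

/-- For a qubit density matrix `ρ`, the maximum of `(1/2)‖[ρ,H]‖₁` over real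
diagonal `H` with Hilbert–Schmidt norm `‖H‖₂ ≤ 1` equals `√2 |ρ₁₂|`, attained
at `H = (1/√2)(|1⟩⟨1| − |2⟩⟨2|)`. -/
theorem qubit_gradient_HS (ρ : Matrix (Fin 2) (Fin 2) ℂ)
    (hρ : ρ.PosSemidef) (htr : ρ.trace = 1) :
    IsGreatest {x : ℝ | ∃ h : Fin 2 → ℝ, Real.sqrt (∑ j, h j ^ 2) ≤ 1 ∧
        x = (1 / 2) * traceNorm
          (ρ * Matrix.diagonal (fun j => (h j : ℂ))
            - Matrix.diagonal (fun j => (h j : ℂ)) * ρ)}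
      (Real.sqrt 2 * ‖ρ 0 1‖) ∧
    (1 / 2) * traceNorm
        (ρ * Matrix.diagonal ![((1 / Real.sqrt 2 : ℝ) : ℂ), -((1 / Real.sqrt 2 : ℝ) : ℂ)]
          - Matrix.diagonal ![((1 / Real.sqrt 2 : ℝ) : ℂ), -((1 / Real.sqrt 2 : ℝ) : ℂ)] * ρ)
      = Real.sqrt 2 * ‖ρ 0 1‖ := by
  have hherm := hρ.1
  set h₀ : Fin 2 → ℝ := ![1 / Real.sqrt 2, -(1 / Real.sqrt 2)] with hh₀
  have h2 : (0:ℝ) < Real.sqrt 2 := Real.sqrt_pos.mpr (by norm_num)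
  have h2' : Real.sqrt 2 * Real.sqrt 2 = 2 := Real.mul_self_sqrt (by norm_num)
  have hdiag : (fun j => ((h₀ j : ℝ) : ℂ))
      = ![((1 / Real.sqrt 2 : ℝ) : ℂ), -((1 / Real.sqrt 2 : ℝ) : ℂ)] := by
    funext j
    fin_cases j <;> simp [hh₀]
  have hval : (1 / 2) * traceNorm
        (ρ * Matrix.diagonal (fun j => ((h₀ j : ℝ) : ℂ))
          - Matrix.diagonal (fun j => ((h₀ j : ℝ) : ℂ)) * ρ)
      = Real.sqrt 2 * ‖ρ 0 1‖ := by
    rw [half_traceNorm_comm ρ hherm h₀]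
    have : h₀ 1 - h₀ 0 = (-(1 / Real.sqrt 2)) - (1 / Real.sqrt 2) := by
      simp [hh₀]
    rw [this, sqrt2_half, mul_comm]
  have hnorm : Real.sqrt (∑ j, h₀ j ^ 2) ≤ 1 := by
    have e0 : h₀ 0 = 1 / Real.sqrt 2 := by simp [hh₀]
    have e1 : h₀ 1 = -(1 / Real.sqrt 2) := by simp [hh₀]
    have hsq : (1 / Real.sqrt 2) ^ 2 = 1 / 2 := by
      rw [div_pow, one_pow, sq, h2']
    have hneg : (-(1 / Real.sqrt 2)) ^ 2 = (1 / Real.sqrt 2) ^ 2 := by ring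
    have : (∑ j, h₀ j ^ 2) = 1 := by
      rw [Fin.sum_univ_two, e0, e1, hneg, hsq]; norm_num
    rw [this, Real.sqrt_one]
  refine ⟨⟨⟨h₀, hnorm, hval.symm⟩, ?_⟩, by rw [← hdiag]; exact hval⟩
  rintro x ⟨h, hle, rfl⟩
  rw [half_traceNorm_comm ρ hherm h]
  have hsum : h 0 ^ 2 + h 1 ^ 2 ≤ 1 := by
    have h01 : (0:ℝ) ≤ h 0 ^ 2 + h 1 ^ 2 := by positivity
    have := Real.sqrt_le_sqrt (le_of_eq (Fin.sum_univ_two (fun j => h j ^ 2)))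
    nlinarith [Real.sq_sqrt h01, Real.sqrt_nonneg (∑ j, h j ^ 2),
      (Fin.sum_univ_two (fun j => h j ^ 2)) ▸ hle]
  have habs : |h 1 - h 0| ≤ Real.sqrt 2 := by
    rw [abs_le]
    constructor <;> nlinarith [sq_nonneg (h 0 + h 1), sq_nonneg (h 0 - h 1)]
  calc ‖ρ 0 1‖ * |h 1 - h 0|
      ≤ ‖ρ 0 1‖ * Real.sqrt 2 :=
        mul_le_mul_of_nonneg_left habs (norm_nonneg _)
    _ = Real.sqrt 2 * ‖ρ 0 1‖ := mul_comm _ _
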